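/- The map φ_{α,β} is a difference isomorphism between the difference fields (F(y,z), τ) and (F(y,z), σ_y), where τ = σ_y^β ∘ σ_z^{−α}; that is, σ_y ∘ φ_{α,β} = φ_{α,β} ∘ τ. -/

import Mathlib

open RatFunc in
private theorem ratfunc2_ringHom_ext {F K : Type*} [Field F] [Field K]
    {f g : RatFunc (RatFunc F) →+* K}
    (hC : ∀ c : F, f (RatFunc.C (RatFunc.C c)) = g (RatFunc.C (RatFunc.C c)))
    (hy : f (RatFunc.C RatFunc.X) = g (RatFunc.C RatFunc.X))
    (hz : f RatFunc.X = g RatFunc.X) : f = g := by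
  have inner : f.comp RatFunc.C = g.comp RatFunc.C := by
    apply IsLocalization.ringHom_ext (nonZeroDivisors (Polynomial F))
    apply Polynomial.ringHom_ext
    · intro a
      simpa [RatFunc.algebraMap_C] using hC a
    · simpa [RatFunc.algebraMap_X] using hy
  apply IsLocalization.ringHom_ext (nonZeroDivisors (Polynomial (RatFunc F)))
  apply Polynomial.ringHom_ext
  · intro a
    simpa [RatFunc.algebraMap_C] using RingHom.congr_fun inner a
  · simpa [RatFunc.algebraMap_X] using hz

private theorem zpow_shift {K : Type*} [Field K]
    (e : K ≃+* K) (a : K) (ha : e a = a + 1)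
    (n : ℤ) : (e ^ n) a = a + n := by
  have hsymm : e.symm a = a - 1 := by
    have h1 : e (a - 1) = a := by rw [map_sub, ha, map_one]; ring
    calc e.symm a = e.symm (e (a - 1)) := by rw [h1]
      _ = a - 1 := e.symm_apply_apply _
  induction n using Int.induction_on with
  | zero => rw [Int.cast_zero, add_zero]; rfl
  | succ k ih =>
      have : (e ^ ((k : ℤ) + 1)) a = (e ^ (k : ℤ)) (e a) := by
        rw [zpow_add_one]; rfl
      rw [this, ha, map_add, map_one, ih]; push_cast; ring
  | pred k ih =>
      have : (e ^ (-(k : ℤ) - 1)) a = (e ^ (-(k : ℤ))) (e⁻¹ a) := by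
        rw [zpow_sub_one]; rfl
      rw [this]
      have : (e⁻¹ : K ≃+* K) a = a - 1 := hsymm
      rw [this, map_sub, map_one, ih]; push_cast; ring

private theorem zpow_fix {K : Type*} [Field K]
    (e : K ≃+* K) (a : K) (ha : e a = a)
    (n : ℤ) : (e ^ n) a = a := by
  have hsymm : e.symm a = a := by rw [← ha, RingEquiv.symm_apply_apply, ha]
  induction n using Int.induction_on with
  | zero => rfl
  | succ k ih =>
      have : (e ^ ((k : ℤ) + 1)) a = (e ^ (k : ℤ)) (e a) := by
        rw [zpow_add_one]; rfl
      rw [this, ha, ih]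
  | pred k ih =>
      have h : (e ^ (-(k : ℤ) - 1)) a = (e ^ (-(k : ℤ))) (e⁻¹ a) := by
        rw [zpow_sub_one]; rfl
      have h2 : (e⁻¹ : K ≃+* K) a = a := hsymm
      rw [h, h2, ih]

/-- `φ_{α,β}` is a difference isomorphism between `(F(y,z), τ)` and `(F(y,z), σ_y)`,
where `τ = σ_y^β σ_z^{-α}`: that is, `σ_y ∘ φ_{α,β} = φ_{α,β} ∘ τ`. Here
`F(y,z)` is modeled as `RatFunc (RatFunc F)` with `y = RatFunc.C RatFunc.X` and
`z = RatFunc.X`, the automorphisms `σ_y`, `σ_z` are characterized by fixing `F` and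
shifting `y`, resp. `z`, by `1`, and `φ = φ_{α,β}` is the `F`-automorphism with
`φ(y) = β y` and `φ(z) = β⁻¹ z - α y`. -/
theorem phi_is_difference_isomorphism {F : Type*} [Field F] [CharZero F]
    (α β : ℤ) (hβ : β ≠ 0)
    (σy σz φ : RatFunc (RatFunc F) ≃+* RatFunc (RatFunc F))
    (hσyF : ∀ c : F, σy (RatFunc.C (RatFunc.C c)) = RatFunc.C (RatFunc.C c))
    (hσyy : σy (RatFunc.C (RatFunc.X : RatFunc F)) = RatFunc.C (RatFunc.X : RatFunc F) + 1)
    (hσyz : σy RatFunc.X = RatFunc.X)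
    (hσzF : ∀ c : F, σz (RatFunc.C (RatFunc.C c)) = RatFunc.C (RatFunc.C c))
    (hσzy : σz (RatFunc.C (RatFunc.X : RatFunc F)) = RatFunc.C (RatFunc.X : RatFunc F))
    (hσzz : σz RatFunc.X = RatFunc.X + 1)
    (hφF : ∀ c : F, φ (RatFunc.C (RatFunc.C c)) = RatFunc.C (RatFunc.C c))
    (hφy : φ (RatFunc.C (RatFunc.X : RatFunc F)) =
      (β : RatFunc (RatFunc F)) * RatFunc.C (RatFunc.X : RatFunc F))
    (hφz : φ RatFunc.X =
      (β : RatFunc (RatFunc F))⁻¹ * RatFunc.X -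
        (α : RatFunc (RatFunc F)) * RatFunc.C (RatFunc.X : RatFunc F)) :
    ∀ f : RatFunc (RatFunc F), σy (φ f) = φ ((σy ^ β * σz ^ (-α)) f) := by
  set y : RatFunc (RatFunc F) := RatFunc.C RatFunc.X with hy
  set z : RatFunc (RatFunc F) := RatFunc.X with hz
  have τeq : ∀ f, (σy ^ β * σz ^ (-α)) f = (σy ^ β) ((σz ^ (-α)) f) := fun _ => rfl
  have key :
      σy.toRingHom.comp φ.toRingHom
        = φ.toRingHom.comp ((σy ^ β * σz ^ (-α)) : RatFunc (RatFunc F) ≃+* RatFunc (RatFunc F)).toRingHom := by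
    apply ratfunc2_ringHom_ext
    · intro c
      simp only [RingHom.comp_apply, RingEquiv.toRingHom_eq_coe, RingHom.coe_coe]
      rw [hφF, hσyF, τeq, zpow_fix σz _ (hσzF c), zpow_fix σy _ (hσyF c), hφF]
    · simp only [RingHom.comp_apply, RingEquiv.toRingHom_eq_coe, RingHom.coe_coe]
      rw [hφy, map_mul, map_intCast, hσyy, τeq,
        zpow_fix σz y hσzy, zpow_shift σy y hσyy, map_add, hφy, map_intCast]
      ring
    · simp only [RingHom.comp_apply, RingEquiv.toRingHom_eq_coe, RingHom.coe_coe]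
      rw [τeq, zpow_shift σz z hσzz]
      simp only [map_add, map_sub, map_mul, map_intCast, map_inv₀, hσyz, hσyy,
        zpow_fix σy z hσyz, hφz]
      change σy (φ z) = _
      rw [hφz]
      simp only [map_add, map_sub, map_mul, map_intCast, map_inv₀, hσyz, hσyy]
      push_cast
      ring
  intro f
  exact RingHom.congr_fun key f
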